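/- In a finite Markov decision process, a Dirac initial distribution at state q₀ is sure winning for the eventually synchronizing objective in target set T if and only if q₀ ∈ Pre^n(T) for some n ≥ 0, where Pre(S) = {q : ∃ action a, post(q,a) ⊆ S}. -/

import Mathlib

open Finset

structure MDP (Q A : Type) [Fintype Q] [Fintype A] where
  δ : Q → A → Q → ℝ
  nonneg : ∀ q a q', 0 ≤ δ q a q'
  sum_one : ∀ q a, ∑ q', δ q a q' = 1

structure Strat (Q A : Type) [Fintype A] where
  σ : List Q → A → ℝ
  nonneg : ∀ h a, 0 ≤ σ h a
  sum_one : ∀ h, ∑ a, σ h a = 1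

variable {Q A : Type} [Fintype Q] [DecidableEq Q] [Fintype A]

/-- Probability of a path of length `n` (i.e. `n+1` states) from initial
distribution `μ0` under strategy `α`. The history passed to the strategy is
the list of visited states, most recent first. -/
noncomputable def pathProb (M : MDP Q A) (μ0 : Q → ℝ) (α : Strat Q A)
    {n : ℕ} (π : Fin (n + 1) → Q) : ℝ :=
  μ0 (π 0) *
    ∏ i : Fin n,
      ∑ a,
        α.σ (List.ofFn (fun j : Fin (i.1 + 1) =>
            π ⟨i.1 - j.1, lt_of_le_of_lt (Nat.sub_le i.1 j.1) (Nat.lt_succ_of_lt i.isLt)⟩)) a *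
          M.δ (π i.castSucc) a (π i.succ)

/-- Distribution over states after `n` steps. -/
noncomputable def Mdist (M : MDP Q A) (μ0 : Q → ℝ) (α : Strat Q A) (n : ℕ) (q : Q) : ℝ :=
  ∑ π : Fin (n + 1) → Q, if π (Fin.last n) = q then pathProb M μ0 α π else 0

/-- Probability mass in `T` after `n` steps. -/
noncomputable def Mmass (M : MDP Q A) (μ0 : Q → ℝ) (α : Strat Q A) (n : ℕ) (T : Finset Q) : ℝ :=
  ∑ q ∈ T, Mdist M μ0 α n q

open scoped Classical in
/-- Support of the transition `δ(q,a)`. -/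
noncomputable def post (M : MDP Q A) (q : Q) (a : A) : Finset Q :=
  Finset.univ.filter (fun q' => 0 < M.δ q a q')

open scoped Classical in
/-- One-step predecessor operator. -/
noncomputable def PreM (M : MDP Q A) (S : Finset Q) : Finset Q :=
  Finset.univ.filter (fun q => ∃ a, post M q a ⊆ S)

def IsDist (μ : Q → ℝ) : Prop := (∀ q, 0 ≤ μ q) ∧ ∑ q, μ q = 1

def dirac (q0 : Q) : Q → ℝ := fun q => if q = q0 then (1 : ℝ) else 0

def PureStrat (α : Strat Q A) : Prop := ∀ h, ∃ a, α.σ h a = 1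

section Aux

variable (M : MDP Q A) (μ0 : Q → ℝ) (α : Strat Q A)

lemma pathProb_nonneg (hμ : ∀ q, 0 ≤ μ0 q) {n : ℕ} (π : Fin (n + 1) → Q) :
    0 ≤ pathProb M μ0 α π := by
  refine mul_nonneg (hμ _) (Finset.prod_nonneg fun i _ => Finset.sum_nonneg fun a _ =>
    mul_nonneg (α.nonneg _ _) (M.nonneg _ _ _))

lemma pathProb_snoc {k : ℕ} (π : Fin (k + 1) → Q) (q' : Q) :
    pathProb M μ0 α (Fin.snoc π q') =
      pathProb M μ0 α π *
        ∑ a, α.σ (List.ofFn (fun j : Fin (k + 1) =>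
            π ⟨k - j.1, lt_of_le_of_lt (Nat.sub_le k j.1) (Nat.lt_succ_self k)⟩)) a *
          M.δ (π (Fin.last k)) a q' := by
  have hc : ∀ (v : ℕ) (h1 : v < k + 2) (h2 : v < k + 1),
      (Fin.snoc π q' : Fin (k + 2) → Q) ⟨v, h1⟩ = π ⟨v, h2⟩ := by
    intro v h1 h2
    have : (⟨v, h1⟩ : Fin (k + 2)) = Fin.castSucc ⟨v, h2⟩ := rfl
    rw [this, Fin.snoc_castSucc]
  unfold pathProb
  rw [Fin.prod_univ_castSucc]
  have h0 : (Fin.snoc π q' : Fin (k + 2) → Q) (0 : Fin (k + 2)) = π 0 := by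
    have : (0 : Fin (k + 2)) = Fin.castSucc 0 := rfl
    rw [this, Fin.snoc_castSucc]
  rw [h0, mul_assoc]
  congr 1
  congr 1
  · apply Finset.prod_congr rfl
    intro i _
    apply Finset.sum_congr rfl
    intro a _
    rw [Fin.succ_castSucc, Fin.snoc_castSucc, Fin.snoc_castSucc]
    congr 2
    exact congrArg List.ofFn (funext fun j =>
      hc _ _ (lt_of_le_of_lt (Nat.sub_le _ _) (Nat.lt_succ_of_lt i.isLt)))
  · apply Finset.sum_congr rfl
    intro a _
    rw [Fin.succ_last, Fin.snoc_last]
    congr 2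
    · exact congrArg List.ofFn (funext fun j =>
        hc _ _ (lt_of_le_of_lt (Nat.sub_le _ _) (Nat.lt_succ_self k)))
    · exact hc _ _ (Nat.lt_succ_self k)

lemma sum_pathProb (hμ : IsDist μ0) :
    ∀ n : ℕ, ∑ π : Fin (n + 1) → Q, pathProb M μ0 α π = 1 := by
  intro n
  induction n with
  | zero =>
    rw [← hμ.2]
    apply Fintype.sum_equiv (Equiv.funUnique (Fin 1) Q)
    intro π
    simp [pathProb, Equiv.funUnique]
  | succ n ih =>
    rw [← Equiv.sum_comp (Fin.snocEquiv (fun _ : Fin (n + 2) => Q))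
      (fun π => pathProb M μ0 α π)]
    show ∑ p : Q × (Fin (n + 1) → Q), pathProb M μ0 α (Fin.snoc p.2 p.1) = 1
    rw [Fintype.sum_prod_type_right]
    calc ∑ p : Fin (n + 1) → Q, ∑ x : Q, pathProb M μ0 α (Fin.snoc p x)
          = ∑ p : Fin (n + 1) → Q, pathProb M μ0 α p := by
            apply Finset.sum_congr rfl
            intro p _
            have : ∀ x, pathProb M μ0 α (Fin.snoc p x) = pathProb M μ0 α p *
              ∑ a, α.σ (List.ofFn (fun j : Fin (n + 1) =>
                p ⟨n - j.1, lt_of_le_of_lt (Nat.sub_le n j.1) (Nat.lt_succ_self n)⟩)) a *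
                M.δ (p (Fin.last n)) a x := fun x => pathProb_snoc M μ0 α p x
            simp only [this, ← Finset.mul_sum]
            rw [Finset.sum_comm]
            simp only [← Finset.mul_sum, M.sum_one, mul_one, α.sum_one]
        _ = 1 := ih

lemma Mmass_eq_sum (n : ℕ) (T : Finset Q) :
    Mmass M μ0 α n T =
      ∑ π : Fin (n + 1) → Q, if π (Fin.last n) ∈ T then pathProb M μ0 α π else 0 := by
  unfold Mmass Mdist
  rw [Finset.sum_comm]
  apply Finset.sum_congr rfl
  intro π _
  by_cases h : π (Fin.last n) ∈ T
  · rw [if_pos h, Finset.sum_eq_single (π (Fin.last n))]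
    · rw [if_pos rfl]
    · intro b _ hb; rw [if_neg (fun hc => hb hc.symm)]
    · intro hn; exact absurd h hn
  · rw [if_neg h]
    apply Finset.sum_eq_zero
    intro q hq
    rw [if_neg (fun hc => h (by rw [hc]; exact hq))]

lemma mem_PreM {S : Finset Q} {q : Q} : q ∈ PreM M S ↔ ∃ a, post M q a ⊆ S := by
  simp [PreM]

end Aux

section Forward

lemma forward_dir {M : MDP Q A} {α : Strat Q A} {q0 : Q} {T : Finset Q} {n : ℕ}
    (Hall : ∀ π : Fin (n + 1) → Q, 0 < pathProb M (dirac q0) α π → π (Fin.last n) ∈ T) :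
    q0 ∈ (PreM M)^[n] T := by
  have key : ∀ d k, k + d = n → ∀ π : Fin (k + 1) → Q,
      0 < pathProb M (dirac q0) α π → π (Fin.last k) ∈ (PreM M)^[d] T := by
    intro d
    induction d with
    | zero =>
      intro k hk π hπ
      have : k = n := by omega
      subst this
      simpa using Hall π hπ
    | succ d ih =>
      intro k hk π hπ
      set h := List.ofFn (fun j : Fin (k + 1) =>
        π ⟨k - j.1, lt_of_le_of_lt (Nat.sub_le k j.1) (Nat.lt_succ_self k)⟩) with hh
      obtain ⟨a, ha⟩ : ∃ a, 0 < α.σ h a := by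
        by_contra hcon
        push_neg at hcon
        have h1 := α.sum_one h
        have h2 : ∑ a, α.σ h a = 0 :=
          Finset.sum_eq_zero fun a _ => le_antisymm (hcon a) (α.nonneg h a)
        rw [h1] at h2
        norm_num at h2
      have hsub : post M (π (Fin.last k)) a ⊆ (PreM M)^[d] T := by
        intro q' hq'
        have hq'pos : 0 < M.δ (π (Fin.last k)) a q' := by
          simpa [post] using hq'
        have hext : 0 < pathProb M (dirac q0) α (Fin.snoc π q') := by
          rw [pathProb_snoc]
          refine mul_pos hπ ?_
          refine Finset.sum_pos' (fun b _ => mul_nonneg (α.nonneg _ _) (M.nonneg _ _ _)) ?_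
          exact ⟨a, Finset.mem_univ a, mul_pos ha hq'pos⟩
        have := ih (k + 1) (by omega) (Fin.snoc π q') hext
        simpa [Fin.snoc_last] using this
      rw [Function.iterate_succ_apply']
      exact (mem_PreM M).2 ⟨a, hsub⟩
  have hpos : 0 < pathProb M (dirac q0) α (fun _ : Fin 1 => q0) := by
    simp [pathProb, dirac]
  simpa using key n 0 (by omega) (fun _ => q0) hpos

end Forward

section Backward

variable (M : MDP Q A)

noncomputable def pick [Nonempty A] (S : Finset Q) (q : Q) : A :=
  if h : ∃ a, post M q a ⊆ S then h.choose else Classical.arbitrary A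

lemma pick_spec [Nonempty A] {S : Finset Q} {q : Q} (hq : q ∈ PreM M S) :
    post M q (pick M S q) ⊆ S := by
  have h : ∃ a, post M q a ⊆ S := (mem_PreM M).1 hq
  rw [pick, dif_pos h]
  exact h.choose_spec

noncomputable def act [Nonempty A] (T : Finset Q) (N : ℕ) : List Q → A
  | [] => Classical.arbitrary A
  | q :: rest => pick M ((PreM M)^[N - (rest.length + 1)] T) q

open scoped Classical in
noncomputable def stratOf [Nonempty A] (T : Finset Q) (N : ℕ) : Strat Q A where
  σ h a := if a = act M T N h then 1 else 0
  nonneg := by intro h a; split <;> norm_num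
  sum_one := by intro h; simp

lemma backward_dir [Nonempty A] (q0 : Q) (T : Finset Q) (N : ℕ)
    (h0 : q0 ∈ (PreM M)^[N] T) :
    Mmass M (dirac q0) (stratOf M T N) N T = 1 := by
  classical
  set α := stratOf M T N with hα
  have hdist : IsDist (dirac q0 : Q → ℝ) := by
    constructor
    · intro q; unfold dirac; split <;> norm_num
    · simp [dirac]
  have inv : ∀ π : Fin (N + 1) → Q, 0 < pathProb M (dirac q0) α π →
      ∀ m (hm : m < N + 1), π ⟨m, hm⟩ ∈ (PreM M)^[N - m] T := by
    intro π hπ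
    have hne : pathProb M (dirac q0) α π ≠ 0 := ne_of_gt hπ
    unfold pathProb at hne
    rw [mul_ne_zero_iff] at hne
    have h00 : π 0 = q0 := by
      have := hne.1
      unfold dirac at this
      by_contra hc
      rw [if_neg hc] at this
      exact this rfl
    have hfac : ∀ i : Fin N, 0 <
        ∑ a, α.σ (List.ofFn (fun j : Fin (i.1 + 1) =>
            π ⟨i.1 - j.1, lt_of_le_of_lt (Nat.sub_le i.1 j.1) (Nat.lt_succ_of_lt i.isLt)⟩)) a *
          M.δ (π i.castSucc) a (π i.succ) := by
      intro i
      have hne2 := hne.2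
      rw [Finset.prod_ne_zero_iff] at hne2
      have := hne2 i (Finset.mem_univ i)
      refine lt_of_le_of_ne ?_ (Ne.symm this)
      exact Finset.sum_nonneg fun a _ => mul_nonneg (α.nonneg _ _) (M.nonneg _ _ _)
    intro m
    induction m with
    | zero =>
      intro hm
      have : π ⟨0, hm⟩ = q0 := h00
      rw [this]
      simpa using h0
    | succ m ih =>
      intro hm
      have hmN : m < N := by omega
      have hmem := ih (by omega)
      have hstep := hfac ⟨m, hmN⟩
      -- compute the strategy values
      have hact : ∀ a, α.σ (List.ofFn (fun j : Fin (m + 1) =>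
          π ⟨m - j.1, lt_of_le_of_lt (Nat.sub_le m j.1) (Nat.lt_succ_of_lt hmN)⟩)) a =
          if a = pick M ((PreM M)^[N - (m + 1)] T) (π ⟨m, by omega⟩) then 1 else 0 := by
        intro a
        rw [hα]
        show (if a = act M T N _ then (1:ℝ) else 0) = _
        congr 2
        rw [List.ofFn_succ]
        show act M T N (_ :: _) = _
        unfold act
        simp
      have hδ : 0 < M.δ (π ⟨m, by omega⟩)
          (pick M ((PreM M)^[N - (m + 1)] T) (π ⟨m, by omega⟩)) (π ⟨m + 1, hm⟩) := by
        have hcs : (⟨m, hmN⟩ : Fin N).castSucc = (⟨m, by omega⟩ : Fin (N + 1)) := rfl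
        have hsc : (⟨m, hmN⟩ : Fin N).succ = (⟨m + 1, hm⟩ : Fin (N + 1)) := rfl
        rw [hcs, hsc] at hstep
        have : ∑ a, α.σ (List.ofFn (fun j : Fin (m + 1) =>
            π ⟨m - j.1, lt_of_le_of_lt (Nat.sub_le m j.1) (Nat.lt_succ_of_lt hmN)⟩)) a *
            M.δ (π ⟨m, by omega⟩) a (π ⟨m + 1, hm⟩) =
            M.δ (π ⟨m, by omega⟩)
              (pick M ((PreM M)^[N - (m + 1)] T) (π ⟨m, by omega⟩)) (π ⟨m + 1, hm⟩) := by
          simp only [hact, ite_mul, one_mul, zero_mul]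
          simp
        rw [this] at hstep
        exact hstep
      have hmem' : π ⟨m, by omega⟩ ∈ PreM M ((PreM M)^[N - (m + 1)] T) := by
        have : N - m = (N - (m + 1)) + 1 := by omega
        rw [this, Function.iterate_succ_apply'] at hmem
        exact hmem
      have := pick_spec M hmem'
      apply this
      simp [post]
      exact hδ
  rw [Mmass_eq_sum, ← sum_pathProb M (dirac q0) α hdist N]
  apply Finset.sum_congr rfl
  intro π _
  rcases lt_or_eq_of_le (pathProb_nonneg M (dirac q0) α hdist.1 π) with hp | hp
  · rw [if_pos]
    have := inv π hp N (by omega)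
    simpa [Fin.last] using this
  · rw [← hp]; simp

end Backward

/-- A Dirac initial distribution at `q₀` is sure winning for eventually
synchronizing in `T` iff `q₀ ∈ Pre^n(T)` for some `n`. -/
theorem sure_eventually_iff_pre {Q A : Type} [Fintype Q] [DecidableEq Q]
    [Fintype A] [Nonempty Q] [Nonempty A]
    (M : MDP Q A) (q0 : Q) (T : Finset Q) :
    (∃ (α : Strat Q A) (n : ℕ), Mmass M (dirac q0) α n T = 1) ↔
      ∃ n : ℕ, q0 ∈ (PreM M)^[n] T := by
  constructor
  · rintro ⟨α, n, hn⟩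
    refine ⟨n, forward_dir (α := α) ?_⟩
    intro π hπ
    have hdist : IsDist (dirac q0 : Q → ℝ) := by
      constructor
      · intro q; unfold dirac; split <;> norm_num
      · simp [dirac]
    by_contra hc
    have htot := sum_pathProb M (dirac q0) α hdist n
    rw [Mmass_eq_sum] at hn
    have hsplit : ∑ π : Fin (n + 1) → Q,
        (if π (Fin.last n) ∈ T then pathProb M (dirac q0) α π else 0) +
        ∑ π : Fin (n + 1) → Q,
        (if π (Fin.last n) ∈ T then 0 else pathProb M (dirac q0) α π) = 1 := by
      rw [← Finset.sum_add_distrib]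
      rw [← htot]
      apply Finset.sum_congr rfl
      intro π' _
      split <;> ring
    rw [hn] at hsplit
    have hz : ∑ π : Fin (n + 1) → Q,
        (if π (Fin.last n) ∈ T then 0 else pathProb M (dirac q0) α π) = 0 := by
      linarith
    have := (Finset.sum_eq_zero_iff_of_nonneg (fun π' _ => by
      split
      · exact le_refl 0
      · exact pathProb_nonneg M (dirac q0) α hdist.1 π')).1 hz π (Finset.mem_univ π)
    rw [if_neg hc] at this
    exact absurd this (ne_of_gt hπ)
  · rintro ⟨n, hn⟩
    exact ⟨stratOf M T n, n, backward_dir M q0 T n hn⟩
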